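/- arXiv:1309.7857 — 3 statements merged into one kernel-verified Lean document; each statement's English description precedes it below -/
import Mathlib

section
/- Injectivity criterion: let M ∈ ℝ^{k×k} be symmetric positive semidefinite, B ∈ ℝ^{k×n} injective, C ∈ ℝ^{k×l}, A ∈ ℝ^{n×p}. Then the block matrix 𝓜 with rows [−Cᵀ, 0; 0, −Aᵀ; M, −B; Bᵀ, 0] (acting on (u, y) ∈ ℝ^k × ℝ^n) is injective if and only if Null(M) ∩ Null(Bᵀ) ∩ Null(Cᵀ) = {0}. -/
open Matrix

theorem kkt_matrix_injectivity {k n l p : ℕ}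
    (M : Matrix (Fin k) (Fin k) ℝ) (hM : M.PosSemidef)
    (B : Matrix (Fin k) (Fin n) ℝ) (hB : Function.Injective B.mulVec)
    (C : Matrix (Fin k) (Fin l) ℝ) (A : Matrix (Fin n) (Fin p) ℝ) :
    Function.Injective
        (fun uy : (Fin k → ℝ) × (Fin n → ℝ) =>
          (-(Cᵀ.mulVec uy.1), -(Aᵀ.mulVec uy.2),
            M.mulVec uy.1 - B.mulVec uy.2, Bᵀ.mulVec uy.1)) ↔
      ∀ u : Fin k → ℝ, M.mulVec u = 0 → Bᵀ.mulVec u = 0 → Cᵀ.mulVec u = 0 → u = 0 := by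
  constructor
  · intro hinj u hMu hBu hCu
    have h := hinj (a₁ := (u, 0)) (a₂ := (0, 0)) (by simp [hMu, hBu, hCu])
    exact congrArg Prod.fst h
  · intro h a b hab
    simp only [Prod.mk.injEq, neg_inj] at hab
    obtain ⟨h1, h2, h3, h4⟩ := hab
    set u := a.1 - b.1 with hu
    set y := a.2 - b.2 with hy
    have hC : Cᵀ.mulVec u = 0 := by rw [hu, mulVec_sub, h1, sub_self]
    have hBt : Bᵀ.mulVec u = 0 := by rw [hu, mulVec_sub, h4, sub_self]
    have hMBy : M.mulVec u = B.mulVec y := by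
      rw [hu, hy, mulVec_sub, mulVec_sub]
      exact sub_eq_sub_iff_sub_eq_sub.mpr h3
    have hdot : star u ⬝ᵥ M.mulVec u = 0 := by
      rw [hMBy]
      have : star u ⬝ᵥ B.mulVec y = Bᵀ.mulVec (star u) ⬝ᵥ y := by
        rw [dotProduct_mulVec, ← mulVec_transpose]
      rw [this]
      have : star u = u := rfl
      rw [this, hBt, zero_dotProduct]
    have hMu : M.mulVec u = 0 := (hM.dotProduct_mulVec_zero_iff u).mp hdot
    have hBy : B.mulVec y = 0 := hMBy ▸ hMu
    have hy0 : y = 0 := hB (by rw [hBy, mulVec_zero])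
    have hu0 : u = 0 := h u hMu hBt hC
    have e1 : a.1 = b.1 := by rwa [hu, sub_eq_zero] at hu0
    have e2 : a.2 = b.2 := by rwa [hy, sub_eq_zero] at hy0
    exact Prod.ext e1 e2
end

section
/- Invertibility of the reduced KKT matrix: let M ∈ ℝ^{k×k} be symmetric positive semidefinite, B ∈ ℝ^{k×n} injective, C ∈ ℝ^{k×l}, A ∈ ℝ^{n×p}, and let S, Q ∈ ℝ^{l×l} and R, W ∈ ℝ^{p×p} be diagonal matrices with strictly positive diagonal entries. Then the block matrix [[M + C S Q⁻¹ Cᵀ, −B], [Bᵀ, A R W⁻¹ Aᵀ]] is invertible if and only if Null(M) ∩ Null(Bᵀ) ∩ Null(Cᵀ) = {0}. -/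
open Matrix

private lemma psd_aux {k l : ℕ} (C : Matrix (Fin k) (Fin l) ℝ) (d : Fin l → ℝ)
    (hd : ∀ i, 0 ≤ d i) : (C * Matrix.diagonal d * Cᵀ).PosSemidef := by
  have h := (Matrix.posSemidef_diagonal_iff.mpr hd).mul_mul_conjTranspose_same C
  rwa [Matrix.conjTranspose_eq_transpose_of_trivial] at h

private lemma ker_aux {k l : ℕ} (C : Matrix (Fin k) (Fin l) ℝ) (d : Fin l → ℝ)
    (hd : ∀ i, 0 < d i) (x : Fin k → ℝ)
    (h : x ⬝ᵥ (C * Matrix.diagonal d * Cᵀ) *ᵥ x = 0) : Cᵀ *ᵥ x = 0 := by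
  set z := Cᵀ *ᵥ x with hz
  have e : x ⬝ᵥ (C * Matrix.diagonal d * Cᵀ) *ᵥ x = ∑ i, d i * (z i * z i) := by
    rw [Matrix.mul_assoc, ← Matrix.mulVec_mulVec, ← Matrix.mulVec_mulVec,
      Matrix.dotProduct_mulVec, ← Matrix.mulVec_transpose, ← hz]
    simp [Matrix.mulVec_diagonal, dotProduct, mul_comm, mul_left_comm]
  rw [e] at h
  have hzero : ∀ i ∈ Finset.univ, d i * (z i * z i) = 0 := by
    intro i _
    have hnn : ∀ j ∈ (Finset.univ : Finset (Fin l)), 0 ≤ d j * (z j * z j) :=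
      fun j _ => mul_nonneg (hd j).le (mul_self_nonneg _)
    exact (Finset.sum_eq_zero_iff_of_nonneg hnn).mp h i (Finset.mem_univ i)
  funext i
  have := hzero i (Finset.mem_univ i)
  have hz2 : z i * z i = 0 := by
    rcases mul_eq_zero.mp this with h' | h'
    · exact absurd h' (hd i).ne'
    · exact h'
  simpa using mul_self_eq_zero.mp hz2

theorem reduced_kkt_invertibility {k n l p : ℕ}
    (M : Matrix (Fin k) (Fin k) ℝ) (hM : M.PosSemidef)
    (B : Matrix (Fin k) (Fin n) ℝ) (hB : Function.Injective B.mulVec)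
    (C : Matrix (Fin k) (Fin l) ℝ) (A : Matrix (Fin n) (Fin p) ℝ)
    (s q : Fin l → ℝ) (r w : Fin p → ℝ)
    (hs : ∀ i, 0 < s i) (hq : ∀ i, 0 < q i) (hr : ∀ i, 0 < r i) (hw : ∀ i, 0 < w i) :
    IsUnit
        (Matrix.fromBlocks
          (M + C * Matrix.diagonal s * (Matrix.diagonal q)⁻¹ * Cᵀ) (-B)
          Bᵀ (A * Matrix.diagonal r * (Matrix.diagonal w)⁻¹ * Aᵀ)) ↔
      ∀ u : Fin k → ℝ, M.mulVec u = 0 → Bᵀ.mulVec u = 0 → Cᵀ.mulVec u = 0 → u = 0 := by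
  -- rewrite the diagonal inverses
  have hqd : (Matrix.diagonal q)⁻¹ = Matrix.diagonal fun i => (q i)⁻¹ :=
    Matrix.inv_eq_right_inv (by
      rw [Matrix.diagonal_mul_diagonal]
      simp [fun i => mul_inv_cancel₀ (hq i).ne'])
  have hwd : (Matrix.diagonal w)⁻¹ = Matrix.diagonal fun i => (w i)⁻¹ :=
    Matrix.inv_eq_right_inv (by
      rw [Matrix.diagonal_mul_diagonal]
      simp [fun i => mul_inv_cancel₀ (hw i).ne'])
  set d1 : Fin l → ℝ := fun i => s i * (q i)⁻¹ with hd1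
  set d2 : Fin p → ℝ := fun i => r i * (w i)⁻¹ with hd2
  have hd1pos : ∀ i, 0 < d1 i := fun i => mul_pos (hs i) (inv_pos.mpr (hq i))
  have hd2pos : ∀ i, 0 < d2 i := fun i => mul_pos (hr i) (inv_pos.mpr (hw i))
  have hCG : C * Matrix.diagonal s * (Matrix.diagonal q)⁻¹ * Cᵀ
      = C * Matrix.diagonal d1 * Cᵀ := by
    rw [hqd, Matrix.mul_assoc C, Matrix.diagonal_mul_diagonal]
  have hAG : A * Matrix.diagonal r * (Matrix.diagonal w)⁻¹ * Aᵀ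
      = A * Matrix.diagonal d2 * Aᵀ := by
    rw [hwd, Matrix.mul_assoc A, Matrix.diagonal_mul_diagonal]
  rw [hCG, hAG]
  set G := C * Matrix.diagonal d1 * Cᵀ with hG
  set H := A * Matrix.diagonal d2 * Aᵀ with hH
  have hGpsd : G.PosSemidef := psd_aux C d1 (fun i => (hd1pos i).le)
  have hHpsd : H.PosSemidef := psd_aux A d2 (fun i => (hd2pos i).le)
  set K := Matrix.fromBlocks (M + G) (-B) Bᵀ H with hK
  constructor
  · intro hunit u hMu hBu hCu
    have hinj : Function.Injective K.mulVec := Matrix.mulVec_injective_iff_isUnit.mpr hunit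
    have hx : K *ᵥ (Sum.elim u (0 : Fin n → ℝ)) = 0 := by
      rw [hK, Matrix.fromBlocks_mulVec]
      have hGu : G *ᵥ u = 0 := by
        rw [hG, Matrix.mul_assoc, ← Matrix.mulVec_mulVec, ← Matrix.mulVec_mulVec, hCu]
        simp
      simp [Matrix.add_mulVec, hMu, hGu, hBu]
    have h0 : K *ᵥ (Sum.elim u (0 : Fin n → ℝ)) = K *ᵥ 0 := by simp [hx]
    have := hinj h0
    funext i
    exact congrFun this (Sum.inl i)
  · intro hker
    rw [← Matrix.mulVec_injective_iff_isUnit]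
    have hker' : ∀ x : Fin k ⊕ Fin n → ℝ, K *ᵥ x = 0 → x = 0 := by
      intro x hx
      set u : Fin k → ℝ := x ∘ Sum.inl with hu
      set v : Fin n → ℝ := x ∘ Sum.inr with hv
      have hxe : x = Sum.elim u v := by funext i; cases i <;> rfl
      rw [hxe, hK, Matrix.fromBlocks_mulVec] at hx
      have h1 : (M + G) *ᵥ u + (-B) *ᵥ v = 0 := funext fun i => congrFun hx (Sum.inl i)
      have h2 : Bᵀ *ᵥ u + H *ᵥ v = 0 := funext fun i => congrFun hx (Sum.inr i)
      -- energy identity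
      have e1 : u ⬝ᵥ ((M + G) *ᵥ u) + u ⬝ᵥ ((-B) *ᵥ v) = 0 := by
        rw [← dotProduct_add, h1, dotProduct_zero]
      have e2 : v ⬝ᵥ (Bᵀ *ᵥ u) + v ⬝ᵥ (H *ᵥ v) = 0 := by
        rw [← dotProduct_add, h2, dotProduct_zero]
      have hcross : u ⬝ᵥ ((-B) *ᵥ v) = - (v ⬝ᵥ (Bᵀ *ᵥ u)) := by
        rw [Matrix.neg_mulVec, dotProduct_neg, Matrix.dotProduct_mulVec,
          ← Matrix.mulVec_transpose, dotProduct_comm]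
      have esum : u ⬝ᵥ (M *ᵥ u) + u ⬝ᵥ (G *ᵥ u) + v ⬝ᵥ (H *ᵥ v) = 0 := by
        have := congrArg₂ (· + ·) e1 e2
        simp only [add_zero] at this
        rw [hcross] at this
        rw [Matrix.add_mulVec, dotProduct_add] at this
        linarith
      have hMnn : 0 ≤ u ⬝ᵥ (M *ᵥ u) := by simpa using hM.dotProduct_mulVec_nonneg u
      have hGnn : 0 ≤ u ⬝ᵥ (G *ᵥ u) := by simpa using hGpsd.dotProduct_mulVec_nonneg u
      have hHnn : 0 ≤ v ⬝ᵥ (H *ᵥ v) := by simpa using hHpsd.dotProduct_mulVec_nonneg v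
      have hM0 : u ⬝ᵥ (M *ᵥ u) = 0 := by linarith
      have hG0 : u ⬝ᵥ (G *ᵥ u) = 0 := by linarith
      have hH0 : v ⬝ᵥ (H *ᵥ v) = 0 := by linarith
      have hCu : Cᵀ *ᵥ u = 0 := ker_aux C d1 hd1pos u hG0
      have hAv : Aᵀ *ᵥ v = 0 := ker_aux A d2 hd2pos v hH0
      have hMu : M *ᵥ u = 0 := (hM.dotProduct_mulVec_zero_iff u).mp (by simpa using hM0)
      have hHv : H *ᵥ v = 0 := by
        rw [hH, Matrix.mul_assoc, ← Matrix.mulVec_mulVec, ← Matrix.mulVec_mulVec, hAv]; simp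
      have hGu : G *ᵥ u = 0 := by
        rw [hG, Matrix.mul_assoc, ← Matrix.mulVec_mulVec, ← Matrix.mulVec_mulVec, hCu]; simp
      have hBu : Bᵀ *ᵥ u = 0 := by
        have := h2; rw [hHv, add_zero] at this; exact this
      have hu0 : u = 0 := hker u hMu hBu hCu
      have hBv : B *ᵥ v = 0 := by
        have := h1
        rw [hu0] at this
        simp only [Matrix.mulVec_zero, zero_add, Matrix.neg_mulVec] at this
        exact neg_eq_zero.mp this
      have hv0 : v = 0 := hB (by rw [hBv, Matrix.mulVec_zero])
      rw [hxe, hu0, hv0]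
      funext i; cases i <;> rfl
    intro a b hab
    have : K *ᵥ (a - b) = 0 := by rw [Matrix.mulVec_sub, hab, sub_self]
    have := hker' _ this
    exact sub_eq_zero.mp this
end

section
/- If a nonzero pair (u, y) satisfies By = (M + CSQ⁻¹Cᵀ)u and Bᵀu = −ARW⁻¹Aᵀy, with M symmetric PSD, S, Q, R, W diagonal positive definite, and B injective, then y = 0 and u is a nonzero vector in Null(M) ∩ Null(Cᵀ) ∩ Null(Bᵀ). -/
open Matrix

theorem reduced_kkt_nonzero_kernel {k n l p : ℕ}
    (M : Matrix (Fin k) (Fin k) ℝ) (hM : M.PosSemidef)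
    (B : Matrix (Fin k) (Fin n) ℝ) (hB : Function.Injective B.mulVec)
    (C : Matrix (Fin k) (Fin l) ℝ) (A : Matrix (Fin n) (Fin p) ℝ)
    (s q : Fin l → ℝ) (r w : Fin p → ℝ)
    (hs : ∀ i, 0 < s i) (hq : ∀ i, 0 < q i) (hr : ∀ i, 0 < r i) (hw : ∀ i, 0 < w i)
    (u : Fin k → ℝ) (y : Fin n → ℝ) (hne : ¬(u = 0 ∧ y = 0))
    (h₁ : B.mulVec y = (M + C * Matrix.diagonal s * (Matrix.diagonal q)⁻¹ * Cᵀ).mulVec u)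
    (h₂ : Bᵀ.mulVec u = -(A * Matrix.diagonal r * (Matrix.diagonal w)⁻¹ * Aᵀ).mulVec y) :
    y = 0 ∧ u ≠ 0 ∧ M.mulVec u = 0 ∧ Cᵀ.mulVec u = 0 ∧ Bᵀ.mulVec u = 0 := by
  -- diagonal inverses
  have hq' : (Matrix.diagonal q)⁻¹ = Matrix.diagonal (fun i => (q i)⁻¹) := by
    apply Matrix.inv_eq_right_inv
    rw [Matrix.diagonal_mul_diagonal]
    have : (fun i => q i * (q i)⁻¹) = fun _ : Fin l => (1:ℝ) := by
      funext i; exact mul_inv_cancel₀ (hq i).ne'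
    rw [this, Matrix.diagonal_one]
  have hw' : (Matrix.diagonal w)⁻¹ = Matrix.diagonal (fun i => (w i)⁻¹) := by
    apply Matrix.inv_eq_right_inv
    rw [Matrix.diagonal_mul_diagonal]
    have : (fun i => w i * (w i)⁻¹) = fun _ : Fin p => (1:ℝ) := by
      funext i; exact mul_inv_cancel₀ (hw i).ne'
    rw [this, Matrix.diagonal_one]
  set e : Fin l → ℝ := fun i => s i * (q i)⁻¹ with he
  set f : Fin p → ℝ := fun i => r i * (w i)⁻¹ with hf
  have hepos : ∀ i, 0 < e i := fun i => mul_pos (hs i) (inv_pos.mpr (hq i))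
  have hfpos : ∀ i, 0 < f i := fun i => mul_pos (hr i) (inv_pos.mpr (hw i))
  have hCT : Cᴴ = Cᵀ := by ext i j; simp
  have hAT : Aᴴ = Aᵀ := by ext i j; simp
  have hDeq : C * Matrix.diagonal s * (Matrix.diagonal q)⁻¹ * Cᵀ
      = C * Matrix.diagonal e * Cᵀ := by
    rw [hq', Matrix.mul_assoc C, Matrix.diagonal_mul_diagonal]
  have hPeq : A * Matrix.diagonal r * (Matrix.diagonal w)⁻¹ * Aᵀ
      = A * Matrix.diagonal f * Aᵀ := by
    rw [hw', Matrix.mul_assoc A, Matrix.diagonal_mul_diagonal]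
  have hD : (C * Matrix.diagonal e * Cᵀ).PosSemidef := by
    rw [← hCT]
    exact (Matrix.posSemidef_diagonal_iff.mpr (fun i => (hepos i).le)).mul_mul_conjTranspose_same C
  have hP : (A * Matrix.diagonal f * Aᵀ).PosSemidef := by
    rw [← hAT]
    exact (Matrix.posSemidef_diagonal_iff.mpr (fun i => (hfpos i).le)).mul_mul_conjTranspose_same A
  -- the central scalar
  have key : u ⬝ᵥ B.mulVec y = Bᵀ.mulVec u ⬝ᵥ y := by
    rw [Matrix.dotProduct_mulVec, Matrix.mulVec_transpose]
  have nonneg1 : (0:ℝ) ≤ u ⬝ᵥ M.mulVec u := by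
    have := hM.dotProduct_mulVec_nonneg u; simpa using this
  have nonneg2 : (0:ℝ) ≤ u ⬝ᵥ (C * Matrix.diagonal e * Cᵀ).mulVec u := by
    have := hD.dotProduct_mulVec_nonneg u; simpa using this
  have nonneg3 : (0:ℝ) ≤ y ⬝ᵥ (A * Matrix.diagonal f * Aᵀ).mulVec y := by
    have := hP.dotProduct_mulVec_nonneg y; simpa using this
  have hsum : u ⬝ᵥ B.mulVec y
      = u ⬝ᵥ M.mulVec u + u ⬝ᵥ (C * Matrix.diagonal e * Cᵀ).mulVec u := by
    rw [h₁, hDeq, Matrix.add_mulVec, dotProduct_add]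
  have hneg : u ⬝ᵥ B.mulVec y = -(y ⬝ᵥ (A * Matrix.diagonal f * Aᵀ).mulVec y) := by
    rw [key, h₂, hPeq, neg_dotProduct, neg_inj, dotProduct_comm]
  have ht0 : u ⬝ᵥ B.mulVec y = 0 := by
    have h1 : (0:ℝ) ≤ u ⬝ᵥ B.mulVec y := hsum ▸ add_nonneg nonneg1 nonneg2
    have h2 : u ⬝ᵥ B.mulVec y ≤ 0 := by rw [hneg]; linarith
    linarith
  have hMu0 : u ⬝ᵥ M.mulVec u = 0 := by
    rw [ht0] at hsum; linarith
  have hDu0 : u ⬝ᵥ (C * Matrix.diagonal e * Cᵀ).mulVec u = 0 := by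
    rw [ht0] at hsum; linarith
  have hPy0 : y ⬝ᵥ (A * Matrix.diagonal f * Aᵀ).mulVec y = 0 := by
    rw [ht0] at hneg; linarith
  -- M u = 0
  have hMu : M.mulVec u = 0 := by
    have := (hM.dotProduct_mulVec_zero_iff u).mp (by simpa using hMu0)
    simpa using this
  -- Cᵀ u = 0
  have hCu : Cᵀ.mulVec u = 0 := by
    have hq2 : (Cᵀ.mulVec u) ⬝ᵥ (Matrix.diagonal e).mulVec (Cᵀ.mulVec u) = 0 := by
      rw [← hDu0, Matrix.mul_assoc, ← Matrix.mulVec_mulVec, Matrix.dotProduct_mulVec u,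
        ← Matrix.mulVec_transpose, Matrix.mulVec_mulVec]
    have hsum0 : ∑ i, e i * (Cᵀ.mulVec u i)^2 = 0 := by
      rw [← hq2]
      simp only [dotProduct, Matrix.mulVec_diagonal]
      exact Finset.sum_congr rfl (fun i _ => by ring)
    ext i
    have := (Finset.sum_eq_zero_iff_of_nonneg (fun i _ =>
      mul_nonneg (hepos i).le (sq_nonneg _))).mp hsum0 i (Finset.mem_univ i)
    have h2 : (Cᵀ.mulVec u i)^2 = 0 := by
      rcases mul_eq_zero.mp this with h | h
      · exact absurd h (hepos i).ne'
      · exact h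
    simpa using pow_eq_zero_iff (n := 2) (by norm_num) |>.mp h2
  -- Aᵀ y = 0, hence P y = 0
  have hAy : Aᵀ.mulVec y = 0 := by
    have hq2 : (Aᵀ.mulVec y) ⬝ᵥ (Matrix.diagonal f).mulVec (Aᵀ.mulVec y) = 0 := by
      rw [← hPy0, Matrix.mul_assoc, ← Matrix.mulVec_mulVec, Matrix.dotProduct_mulVec y,
        ← Matrix.mulVec_transpose, Matrix.mulVec_mulVec]
    have hsum0 : ∑ i, f i * (Aᵀ.mulVec y i)^2 = 0 := by
      rw [← hq2]
      simp only [dotProduct, Matrix.mulVec_diagonal]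
      exact Finset.sum_congr rfl (fun i _ => by ring)
    ext i
    have := (Finset.sum_eq_zero_iff_of_nonneg (fun i _ =>
      mul_nonneg (hfpos i).le (sq_nonneg _))).mp hsum0 i (Finset.mem_univ i)
    have h2 : (Aᵀ.mulVec y i)^2 = 0 := by
      rcases mul_eq_zero.mp this with h | h
      · exact absurd h (hfpos i).ne'
      · exact h
    simpa using pow_eq_zero_iff (n := 2) (by norm_num) |>.mp h2
  have hDu : (C * Matrix.diagonal e * Cᵀ).mulVec u = 0 := by
    rw [Matrix.mul_assoc, ← Matrix.mulVec_mulVec, ← Matrix.mulVec_mulVec, hCu]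
    simp
  -- y = 0
  have hy : y = 0 := by
    apply hB
    rw [h₁, hDeq, Matrix.add_mulVec, hMu, hDu, Matrix.mulVec_zero]
    simp
  -- Bᵀ u = 0
  have hBu : Bᵀ.mulVec u = 0 := by
    rw [h₂, hPeq, Matrix.mul_assoc, ← Matrix.mulVec_mulVec, ← Matrix.mulVec_mulVec, hAy]
    simp
  refine ⟨hy, ?_, hMu, hCu, hBu⟩
  intro hu
  exact hne ⟨hu, hy⟩
end
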